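/- Let g be the Lie algebra over ℂ with basis h, x, y and brackets [h,x] = nx, [h,y] = my, [x,y] = 0, where n, m are positive coprime integers. Then the center of the universal enveloping algebra U(g) is trivial, i.e., equals ℂ. -/

import Mathlib

open UniversalEnvelopingAlgebra MvPolynomial

attribute [local instance 100] LieRing.ofAssociativeRing

namespace CenterUEA
noncomputable section

abbrev V : Type := MvPolynomial (Fin 3) ℂ

def Xop : Module.End ℂ V := LinearMap.mulLeft ℂ (X 0)
def Yop : Module.End ℂ V := LinearMap.mulLeft ℂ (X 1)
def Hop (n m : ℕ) : Module.End ℂ V :=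
  (n : ℂ) • ((LinearMap.mulLeft ℂ (X 0)).comp (pderiv 0).toLinearMap)
  + (m : ℂ) • ((LinearMap.mulLeft ℂ (X 1)).comp (pderiv 1).toLinearMap)
  + LinearMap.mulLeft ℂ (X 2)

lemma Xop_apply (p : V) : Xop p = X 0 * p := rfl
lemma Yop_apply (p : V) : Yop p = X 1 * p := rfl
lemma Hop_apply (n m : ℕ) (p : V) :
    Hop n m p = (n : ℂ) • (X 0 * pderiv 0 p) + (m : ℂ) • (X 1 * pderiv 1 p) + X 2 * p := rfl

lemma lie_Hop_Xop (n m : ℕ) : ⁅Hop n m, Xop⁆ = (n : ℂ) • Xop := by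
  rw [Ring.lie_def]
  refine LinearMap.ext fun p => ?_
  simp only [LinearMap.sub_apply, Module.End.mul_apply, LinearMap.smul_apply,
    Hop_apply, Xop_apply, Derivation.leibniz, pderiv_X_self,
    pderiv_X_of_ne (by decide : (0:Fin 3) ≠ 1), smul_eq_mul, MvPolynomial.smul_eq_C_mul]
  ring

lemma lie_Hop_Yop (n m : ℕ) : ⁅Hop n m, Yop⁆ = (m : ℂ) • Yop := by
  rw [Ring.lie_def]
  refine LinearMap.ext fun p => ?_
  simp only [LinearMap.sub_apply, Module.End.mul_apply, LinearMap.smul_apply,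
    Hop_apply, Yop_apply, Derivation.leibniz, pderiv_X_self,
    pderiv_X_of_ne (by decide : (1:Fin 3) ≠ 0), smul_eq_mul, MvPolynomial.smul_eq_C_mul]
  ring

lemma lie_Xop_Yop : ⁅Xop, Yop⁆ = 0 := by
  rw [Ring.lie_def]
  refine LinearMap.ext fun p => ?_
  simp only [LinearMap.sub_apply, Module.End.mul_apply, LinearMap.zero_apply, Xop_apply, Yop_apply]
  ring

section Main

variable {g : Type} [LieRing g] [LieAlgebra ℂ g]
  (b : Module.Basis (Fin 3) ℂ g) (n m : ℕ)

local notation "U" => UniversalEnvelopingAlgebra ℂ g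

def Hc : U := ι ℂ (b 0)
def Xc : U := ι ℂ (b 1)
def Yc : U := ι ℂ (b 2)

variable (hbr1 : ⁅b 0, b 1⁆ = (n : ℂ) • b 1)
  (hbr2 : ⁅b 0, b 2⁆ = (m : ℂ) • b 2)
  (hbr3 : ⁅b 1, b 2⁆ = 0)

section
include hbr1 in
lemma comm_HX : Hc b * Xc b = Xc b * Hc b + (n : ℂ) • Xc b := by
  have h := (ι ℂ : g →ₗ⁅ℂ⁆ U).map_lie (b 0) (b 1)
  rw [hbr1, map_smul] at h
  rw [Ring.lie_def] at h
  unfold Hc Xc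
  rw [h]
  abel

include hbr2 in
lemma comm_HY : Hc b * Yc b = Yc b * Hc b + (m : ℂ) • Yc b := by
  have h := (ι ℂ : g →ₗ⁅ℂ⁆ U).map_lie (b 0) (b 2)
  rw [hbr2, map_smul] at h
  rw [Ring.lie_def] at h
  unfold Hc Yc
  rw [h]
  abel

include hbr3 in
lemma comm_XY : Xc b * Yc b = Yc b * Xc b := by
  have h := (ι ℂ : g →ₗ⁅ℂ⁆ U).map_lie (b 1) (b 2)
  rw [hbr3, map_zero] at h
  rw [Ring.lie_def] at h
  have h2 := h.symm
  rw [sub_eq_zero] at h2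
  exact h2

include hbr1 in
lemma comm_H_Xpow (i : ℕ) :
    Hc b * Xc b ^ i = Xc b ^ i * Hc b + ((n * i : ℕ) : ℂ) • Xc b ^ i := by
  induction i with
  | zero => simp
  | succ i ih =>
    rw [pow_succ', ← mul_assoc, comm_HX b n hbr1]
    rw [add_mul, smul_mul_assoc, mul_assoc, ih, mul_add, ← mul_assoc, ← pow_succ']
    rw [mul_smul_comm, ← pow_succ']
    rw [add_assoc, ← add_smul]
    congr 1
    push_cast
    ring

include hbr2 in
lemma comm_H_Ypow (j : ℕ) :
    Hc b * Yc b ^ j = Yc b ^ j * Hc b + ((m * j : ℕ) : ℂ) • Yc b ^ j := by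
  induction j with
  | zero => simp
  | succ j ih =>
    rw [pow_succ', ← mul_assoc, comm_HY b m hbr2]
    rw [add_mul, smul_mul_assoc, mul_assoc, ih, mul_add, ← mul_assoc, ← pow_succ']
    rw [mul_smul_comm, ← pow_succ']
    rw [add_assoc, ← add_smul]
    congr 1
    push_cast
    ring
end

def Mon (i j a : ℕ) : U := Xc b ^ i * Yc b ^ j * Hc b ^ a

lemma Mon_mul_H (i j a : ℕ) : Mon b i j a * Hc b = Mon b i j (a + 1) := by
  unfold Mon; rw [mul_assoc, ← pow_succ]

include hbr1 hbr2 in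
lemma H_mul_Mon (i j a : ℕ) :
    Hc b * Mon b i j a = Mon b i j (a + 1) + ((n * i + m * j : ℕ) : ℂ) • Mon b i j a := by
  unfold Mon
  rw [← mul_assoc, ← mul_assoc, comm_H_Xpow b n hbr1 i]
  rw [add_mul, add_mul, smul_mul_assoc, smul_mul_assoc]
  rw [mul_assoc (Xc b ^ i), comm_H_Ypow b m hbr2 j, mul_add, mul_smul_comm,
    add_mul, smul_mul_assoc]
  rw [← mul_assoc, mul_assoc (Xc b ^ i * Yc b ^ j), ← pow_succ']
  push_cast
  rw [add_smul]
  abel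

include hbr3 in
lemma X_mul_Mon (i j a : ℕ) : Xc b * Mon b i j a = Mon b (i+1) j a := by
  unfold Mon; rw [← mul_assoc, ← mul_assoc, ← pow_succ']

include hbr3 in
lemma Y_mul_Mon (i j a : ℕ) : Yc b * Mon b i j a = Mon b i (j+1) a := by
  unfold Mon
  have hc : Commute (Yc b) (Xc b) := (comm_XY b hbr3).symm
  rw [← mul_assoc, ← mul_assoc, (hc.pow_right i).eq, mul_assoc (Xc b ^ i), ← pow_succ']


def MonSet : Set U := Set.range fun k : ℕ × ℕ × ℕ => Mon b k.1 k.2.1 k.2.2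

include hbr1 hbr2 in
lemma H_mul_mem {s : U} (hs : s ∈ Submodule.span ℂ (MonSet b)) :
    Hc b * s ∈ Submodule.span ℂ (MonSet b) := by
  induction hs using Submodule.span_induction with
  | mem u hu =>
    obtain ⟨k, rfl⟩ := hu
    rw [H_mul_Mon b n m hbr1 hbr2]
    exact add_mem (Submodule.subset_span ⟨(k.1, k.2.1, k.2.2 + 1), rfl⟩)
      (Submodule.smul_mem _ _ (Submodule.subset_span ⟨k, rfl⟩))
  | zero => simp
  | add u v _ _ hu hv => rw [mul_add]; exact add_mem hu hv
  | smul c u _ hu => rw [mul_smul_comm]; exact Submodule.smul_mem _ _ hu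

omit hbr3 in
include hbr3 in
lemma X_mul_mem {s : U} (hs : s ∈ Submodule.span ℂ (MonSet b)) :
    Xc b * s ∈ Submodule.span ℂ (MonSet b) := by
  induction hs using Submodule.span_induction with
  | mem u hu =>
    obtain ⟨k, rfl⟩ := hu
    rw [X_mul_Mon b hbr3]
    exact Submodule.subset_span ⟨(k.1 + 1, k.2.1, k.2.2), rfl⟩
  | zero => simp
  | add u v _ _ hu hv => rw [mul_add]; exact add_mem hu hv
  | smul c u _ hu => rw [mul_smul_comm]; exact Submodule.smul_mem _ _ hu

omit hbr3 in
include hbr3 in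
lemma Y_mul_mem {s : U} (hs : s ∈ Submodule.span ℂ (MonSet b)) :
    Yc b * s ∈ Submodule.span ℂ (MonSet b) := by
  induction hs using Submodule.span_induction with
  | mem u hu =>
    obtain ⟨k, rfl⟩ := hu
    rw [Y_mul_Mon b hbr3]
    exact Submodule.subset_span ⟨(k.1, k.2.1 + 1, k.2.2), rfl⟩
  | zero => simp
  | add u v _ _ hu hv => rw [mul_add]; exact add_mem hu hv
  | smul c u _ hu => rw [mul_smul_comm]; exact Submodule.smul_mem _ _ hu

include hbr1 hbr2 hbr3 in
lemma iota_mul_mem (v : g) {s : U} (hs : s ∈ Submodule.span ℂ (MonSet b)) :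
    ι ℂ v * s ∈ Submodule.span ℂ (MonSet b) := by
  have hv : v ∈ Submodule.span ℂ (Set.range b) := by rw [b.span_eq]; trivial
  induction hv using Submodule.span_induction with
  | mem w hw =>
    obtain ⟨i, rfl⟩ := hw
    fin_cases i
    · exact H_mul_mem b n m hbr1 hbr2 hs
    · exact X_mul_mem b hbr3 hs
    · exact Y_mul_mem b hbr3 hs
  | zero => rw [map_zero, zero_mul]; exact Submodule.zero_mem _
  | add x y _ _ hx hy => rw [map_add, add_mul]; exact add_mem hx hy
  | smul c x _ hx => rw [map_smul, smul_mul_assoc]; exact Submodule.smul_mem _ _ hx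

include hbr1 hbr2 hbr3 in
lemma mul_mem_span (u : U) {s : U} (hs : s ∈ Submodule.span ℂ (MonSet b)) :
    u * s ∈ Submodule.span ℂ (MonSet b) := by
  have key : ∀ t : TensorAlgebra ℂ g, ∀ s : U, s ∈ Submodule.span ℂ (MonSet b) →
      (mkAlgHom ℂ g) t * s ∈ Submodule.span ℂ (MonSet b) := by
    intro t
    induction t using TensorAlgebra.induction with
    | algebraMap r =>
      intro s hs
      rw [AlgHom.commutes, ← Algebra.smul_def]
      exact Submodule.smul_mem _ _ hs
    | ι v =>
      intro s hs
      have h0 : (mkAlgHom ℂ g) (TensorAlgebra.ι ℂ v) = ι ℂ v := rfl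
      rw [h0]
      exact iota_mul_mem b n m hbr1 hbr2 hbr3 v hs
    | mul t1 t2 h1 h2 =>
      intro s hs
      rw [map_mul, mul_assoc]
      exact h1 _ (h2 _ hs)
    | add t1 t2 h1 h2 =>
      intro s hs
      rw [map_add, add_mul]
      exact add_mem (h1 _ hs) (h2 _ hs)
  have hsurj : Function.Surjective (mkAlgHom ℂ g) := RingCon.mkₐ_surjective _
  obtain ⟨t, rfl⟩ := hsurj u
  exact key t s hs

include hbr1 hbr2 hbr3 in
lemma span_Mon_eq_top : Submodule.span ℂ (MonSet b) = ⊤ := by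
  rw [eq_top_iff]
  intro u _
  have h1 : (1 : U) ∈ Submodule.span ℂ (MonSet b) :=
    Submodule.subset_span ⟨(0, 0, 0), by simp [Mon]⟩
  simpa using mul_mem_span b n m hbr1 hbr2 hbr3 u h1


include hbr1 hbr2 hbr3 in
lemma exists_rho : ∃ rho : g →ₗ⁅ℂ⁆ Module.End ℂ V,
    rho (b 0) = Hop n m ∧ rho (b 1) = Xop ∧ rho (b 2) = Yop := by
  set L : g →ₗ[ℂ] Module.End ℂ V := b.constr ℂ ![Hop n m, Xop, Yop] with hL
  have hL0 : L (b 0) = Hop n m := by rw [hL, Module.Basis.constr_basis]; rfl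
  have hL1 : L (b 1) = Xop := by rw [hL, Module.Basis.constr_basis]; rfl
  have hL2 : L (b 2) = Yop := by rw [hL, Module.Basis.constr_basis]; rfl
  have g1 : ⁅b 1, b 0⁆ = -((n : ℂ) • b 1) := by rw [← lie_skew, hbr1]
  have g2 : ⁅b 2, b 0⁆ = -((m : ℂ) • b 2) := by rw [← lie_skew, hbr2]
  have g3 : ⁅b 2, b 1⁆ = (0 : g) := by rw [← lie_skew, hbr3, neg_zero]
  have s1 : ⁅Xop, Hop n m⁆ = -((n : ℂ) • Xop) := by rw [← lie_skew, lie_Hop_Xop]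
  have s2 : ⁅Yop, Hop n m⁆ = -((m : ℂ) • Yop) := by rw [← lie_skew, lie_Hop_Yop]
  have s3 : ⁅Yop, Xop⁆ = (0 : Module.End ℂ V) := by rw [← lie_skew, lie_Xop_Yop, neg_zero]
  have key : ∀ x y : g, L ⁅x, y⁆ = ⁅L x, L y⁆ := by
    set B1 : g →ₗ[ℂ] g →ₗ[ℂ] Module.End ℂ V := LinearMap.mk₂ ℂ (fun v w => L ⁅v, w⁆)
      (fun v v' w => by simp [add_lie])
      (fun c v w => by simp [smul_lie])
      (fun v w w' => by simp [lie_add])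
      (fun c v w => by simp [lie_smul]) with hB1
    set B2 : g →ₗ[ℂ] g →ₗ[ℂ] Module.End ℂ V := LinearMap.mk₂ ℂ (fun v w => ⁅L v, L w⁆)
      (fun v v' w => by simp [add_lie])
      (fun c v w => by simp [Ring.lie_def, smul_sub, mul_smul_comm, smul_mul_assoc])
      (fun v w w' => by simp [lie_add])
      (fun c v w => by simp [Ring.lie_def, smul_sub, mul_smul_comm, smul_mul_assoc]) with hB2
    have hB : B1 = B2 := by
      apply LinearMap.ext_basis b b
      intro i j
      rw [hB1, hB2]
      simp only [LinearMap.mk₂_apply]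
      fin_cases i <;> fin_cases j <;>
        simp [hL0, hL1, hL2, hbr1, hbr2, hbr3, g1, g2, g3, s1, s2, s3,
          lie_Hop_Xop, lie_Hop_Yop, lie_Xop_Yop, map_smul, map_neg]
    intro x y
    have hxy := LinearMap.congr_fun (LinearMap.congr_fun hB x) y
    rw [hB1, hB2] at hxy
    simpa using hxy
  exact ⟨{ toLinearMap := L, map_lie' := fun {x y} => key x y }, hL0, hL1, hL2⟩

end Main

section Ops
variable (n m : ℕ)

lemma pd0_X2pow (k : ℕ) : pderiv 0 ((X 2 : V) ^ k) = 0 := by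
  induction k with
  | zero => simp
  | succ k ih => rw [pow_succ, Derivation.leibniz]; simp [ih, pderiv_X_of_ne (by decide : (2 : Fin 3) ≠ 0)]

lemma pd1_X2pow (k : ℕ) : pderiv 1 ((X 2 : V) ^ k) = 0 := by
  induction k with
  | zero => simp
  | succ k ih => rw [pow_succ, Derivation.leibniz]; simp [ih, pderiv_X_of_ne (by decide : (2 : Fin 3) ≠ 1)]

lemma pd0_X2Cpow (c : ℂ) (k : ℕ) : pderiv 0 (((X 2 : V) + C c) ^ k) = 0 := by
  induction k with
  | zero => simp
  | succ k ih =>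
    rw [pow_succ, Derivation.leibniz]
    simp [ih, pderiv_X_of_ne (by decide : (2 : Fin 3) ≠ 0)]

lemma pd1_X2Cpow (c : ℂ) (k : ℕ) : pderiv 1 (((X 2 : V) + C c) ^ k) = 0 := by
  induction k with
  | zero => simp
  | succ k ih =>
    rw [pow_succ, Derivation.leibniz]
    simp [ih, pderiv_X_of_ne (by decide : (2 : Fin 3) ≠ 1)]

lemma Hop_X2pow (a : ℕ) : Hop n m ((X 2 : V) ^ a) = X 2 ^ (a + 1) := by
  rw [Hop_apply]
  simp [pd0_X2pow, pd1_X2pow, pow_succ, mul_comm]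

lemma Hop_pow_one (a : ℕ) : (Hop n m ^ a) 1 = (X 2 : V) ^ a := by
  induction a with
  | zero => simp
  | succ a ih => rw [pow_succ', Module.End.mul_apply, ih, Hop_X2pow]

lemma Hop_X0_shift (k : ℕ) :
    Hop n m ((X 0 : V) * ((X 2 : V) + C (n : ℂ)) ^ k) = X 0 * ((X 2 : V) + C (n : ℂ)) ^ (k + 1) := by
  rw [Hop_apply, Derivation.leibniz, Derivation.leibniz]
  simp [pd0_X2Cpow, pd1_X2Cpow, pderiv_X_of_ne (by decide : (0 : Fin 3) ≠ 1),
    pderiv_X_self, MvPolynomial.smul_eq_C_mul]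
  rw [pow_succ]
  ring

lemma Hop_pow_X0 (a : ℕ) :
    (Hop n m ^ a) (X 0 : V) = X 0 * ((X 2 : V) + C (n : ℂ)) ^ a := by
  induction a with
  | zero => simp
  | succ a ih => rw [pow_succ', Module.End.mul_apply, ih, Hop_X0_shift]

lemma aeval_Hop_one (p : Polynomial ℂ) :
    (Polynomial.aeval (Hop n m) p) (1 : V) = Polynomial.aeval ((X 2 : V)) p := by
  induction p using Polynomial.induction_on' with
  | add p q hp hq => simp [map_add, LinearMap.add_apply, hp, hq]
  | monomial a c =>
    rw [Polynomial.aeval_monomial, Polynomial.aeval_monomial]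
    simp [Module.End.mul_apply, Module.algebraMap_end_apply, Hop_pow_one,
      Algebra.smul_def, MvPolynomial.algebraMap_eq]

lemma aeval_Hop_X0 (p : Polynomial ℂ) :
    (Polynomial.aeval (Hop n m) p) (X 0 : V) =
      X 0 * Polynomial.aeval ((X 2 : V) + C (n : ℂ)) p := by
  induction p using Polynomial.induction_on' with
  | add p q hp hq => simp [map_add, LinearMap.add_apply, hp, hq]; ring
  | monomial a c =>
    rw [Polynomial.aeval_monomial, Polynomial.aeval_monomial]
    simp [Module.End.mul_apply, Module.algebraMap_end_apply, Hop_pow_X0,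
      Algebra.smul_def, MvPolynomial.algebraMap_eq]
    ring

lemma lin_indep :
    LinearIndependent ℂ (fun k : ℕ × ℕ × ℕ => (X 0 : V) ^ k.1 * X 1 ^ k.2.1 * X 2 ^ k.2.2) := by
  have hb := (MvPolynomial.basisMonomials (Fin 3) ℂ).linearIndependent
  set e : ℕ × ℕ × ℕ → (Fin 3 →₀ ℕ) :=
    fun k => Finsupp.equivFunOnFinite.symm ![k.1, k.2.1, k.2.2] with he
  have hinj : Function.Injective e := by
    intro k k' h
    have h' : (![k.1, k.2.1, k.2.2] : Fin 3 → ℕ) = ![k'.1, k'.2.1, k'.2.2] :=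
      Finsupp.equivFunOnFinite.symm.injective h
    have h0 := congrFun h' 0
    have h1 := congrFun h' 1
    have h2 := congrFun h' 2
    simp at h0 h1 h2
    exact Prod.ext h0 (Prod.ext h1 h2)
  have := hb.comp e hinj
  convert this using 1
  funext k
  show (X 0 : V) ^ k.1 * X 1 ^ k.2.1 * X 2 ^ k.2.2 = monomial (e k) 1
  rw [monomial_eq]
  rw [Finsupp.prod_fintype _ _ (fun i => pow_zero _)]
  simp [he, Fin.prod_univ_three]
  all_goals rfl

end Ops
end
end CenterUEA

open CenterUEA in
/-- Let `g` be the Lie algebra over `ℂ` with basis `h, x, y` and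
brackets `[h,x] = n x`, `[h,y] = m y`, `[x,y] = 0`, where `n, m` are positive coprime
integers.  Then the center of `U(g)` is trivial, i.e. reduces to the scalars `ℂ`. -/
theorem center_uea_trivial
    (g : Type) [LieRing g] [LieAlgebra ℂ g]
    (b : Module.Basis (Fin 3) ℂ g)
    (n m : ℕ) (hn : 0 < n) (hm : 0 < m) (hnm : Nat.Coprime n m)
    (hbr1 : ⁅b 0, b 1⁆ = (n : ℂ) • b 1)
    (hbr2 : ⁅b 0, b 2⁆ = (m : ℂ) • b 2)
    (hbr3 : ⁅b 1, b 2⁆ = 0) :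
    Subalgebra.center ℂ (UniversalEnvelopingAlgebra ℂ g) = ⊥ := by
  classical
  apply le_antisymm _ bot_le
  intro z hz
  rw [Subalgebra.mem_center_iff] at hz
  obtain ⟨rho, hr0, hr1, hr2⟩ := exists_rho b n m hbr1 hbr2 hbr3
  set φ : UniversalEnvelopingAlgebra ℂ g →ₐ[ℂ] Module.End ℂ V := lift ℂ rho with hφ
  have hφH : φ (Hc b) = Hop n m := by rw [Hc, hφ, lift_ι_apply, hr0]
  have hφX : φ (Xc b) = Xop := by rw [Xc, hφ, lift_ι_apply, hr1]
  have hφY : φ (Yc b) = Yop := by rw [Yc, hφ, lift_ι_apply, hr2]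
  have hφMon : ∀ i j a : ℕ,
      φ (Mon b i j a) 1 = (MvPolynomial.X 0 : V) ^ i * MvPolynomial.X 1 ^ j * MvPolynomial.X 2 ^ a := by
    intro i j a
    rw [Mon, map_mul, map_mul, map_pow, map_pow, map_pow, hφH, hφX, hφY]
    rw [Module.End.mul_apply, Module.End.mul_apply, Hop_pow_one]
    rw [Xop, Yop, LinearMap.pow_mulLeft, LinearMap.pow_mulLeft,
      LinearMap.mulLeft_apply, LinearMap.mulLeft_apply, mul_assoc]
  have hztop : z ∈ Submodule.span ℂ (MonSet b) := by
    rw [span_Mon_eq_top b n m hbr1 hbr2 hbr3]; trivial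
  rw [MonSet, Finsupp.mem_span_range_iff_exists_finsupp] at hztop
  obtain ⟨f, hf⟩ := hztop
  -- Step 1 : commuting with Hc kills all monomials with i ≠ 0 or j ≠ 0
  have key1 : ∀ k ∈ f.support, f k * ((n * k.1 + m * k.2.1 : ℕ) : ℂ) = 0 := by
    have hsum0 : (f.sum fun k c => (c * ((n * k.1 + m * k.2.1 : ℕ) : ℂ)) •
        Mon b k.1 k.2.1 k.2.2) = 0 := by
      have e1 : Hc b * z = f.sum fun k c => c • (Mon b k.1 k.2.1 (k.2.2 + 1)
          + ((n * k.1 + m * k.2.1 : ℕ) : ℂ) • Mon b k.1 k.2.1 k.2.2) := by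
        rw [← hf, Finsupp.mul_sum]
        exact Finsupp.sum_congr fun k _ => by
          rw [mul_smul_comm, H_mul_Mon b n m hbr1 hbr2]
      have e2 : z * Hc b = f.sum fun k c => c • Mon b k.1 k.2.1 (k.2.2 + 1) := by
        rw [← hf, Finsupp.sum_mul]
        exact Finsupp.sum_congr fun k _ => by rw [smul_mul_assoc, Mon_mul_H]
      have e3 : Hc b * z - z * Hc b = 0 := sub_eq_zero.mpr (hz (Hc b))
      calc (f.sum fun k c => (c * ((n * k.1 + m * k.2.1 : ℕ) : ℂ)) • Mon b k.1 k.2.1 k.2.2)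
          = Hc b * z - z * Hc b := by
            rw [e1, e2, ← Finsupp.sum_sub]
            exact Finsupp.sum_congr fun k _ => by
              rw [smul_add, add_sub_cancel_left, smul_smul]
        _ = 0 := e3
    have h0 := congrArg (fun u => φ u (1 : V)) hsum0
    simp only [map_zero, LinearMap.zero_apply] at h0
    rw [Finsupp.sum, map_sum] at h0
    simp only [map_smul, LinearMap.sum_apply, LinearMap.smul_apply, hφMon] at h0
    exact fun k hk => linearIndependent_iff'.mp lin_indep f.support _ h0 k hk
  have hz2 : z ∈ Submodule.span ℂ (Set.range fun a : ℕ => Hc b ^ a) := by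
    rw [← hf]
    apply Submodule.finsuppSum_mem
    intro k hk0
    have hw : (n * k.1 + m * k.2.1 : ℕ) = 0 := by
      by_contra hne
      have h1 := key1 k (Finsupp.mem_support_iff.mpr hk0)
      have h2 : ((n * k.1 + m * k.2.1 : ℕ) : ℂ) ≠ 0 := Nat.cast_ne_zero.mpr hne
      exact hk0 ((mul_eq_zero.mp h1).resolve_right h2)
    have h3 : n * k.1 = 0 ∧ m * k.2.1 = 0 := Nat.add_eq_zero.mp hw
    have hi : k.1 = 0 := (Nat.mul_eq_zero.mp h3.1).resolve_left hn.ne'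
    have hj : k.2.1 = 0 := (Nat.mul_eq_zero.mp h3.2).resolve_left hm.ne'
    have hMk : Mon b k.1 k.2.1 k.2.2 = Hc b ^ k.2.2 := by
      rw [Mon, hi, hj]; simp
    rw [hMk]
    exact Submodule.smul_mem _ _ (Submodule.subset_span ⟨k.2.2, rfl⟩)
  obtain ⟨f2, hf2⟩ := Finsupp.mem_span_range_iff_exists_finsupp.mp hz2
  set p : Polynomial ℂ := f2.sum fun a c => Polynomial.C c * Polynomial.X ^ a with hp
  have hzp : Polynomial.aeval (Hc b) p = z := by
    rw [← hf2, hp, map_finsuppSum]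
    exact Finsupp.sum_congr fun a _ => by
      rw [map_mul, Polynomial.aeval_C, map_pow, Polynomial.aeval_X, ← Algebra.smul_def]
  have hφz : φ z = Polynomial.aeval (Hop n m) p := by
    rw [← hzp, ← Polynomial.aeval_algHom_apply, hφH]
  have hcomm : Xc b * z = z * Xc b := hz (Xc b)
  have h1 : φ (Xc b * z) 1 = MvPolynomial.X 0 * Polynomial.aeval ((MvPolynomial.X 2 : V)) p := by
    rw [map_mul, Module.End.mul_apply, hφz, aeval_Hop_one, hφX, Xop_apply]
  have h2 : φ (z * Xc b) 1 =
      MvPolynomial.X 0 * Polynomial.aeval ((MvPolynomial.X 2 : V) + MvPolynomial.C (n : ℂ)) p := by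
    rw [map_mul, Module.End.mul_apply, hφX, hφz]
    have hx1 : Xop (1 : V) = MvPolynomial.X 0 := by rw [Xop_apply, mul_one]
    rw [hx1, aeval_Hop_X0]
  have heq : Polynomial.aeval ((MvPolynomial.X 2 : V)) p =
      Polynomial.aeval ((MvPolynomial.X 2 : V) + MvPolynomial.C (n : ℂ)) p :=
    mul_left_cancel₀ (MvPolynomial.X_ne_zero 0) (by rw [← h1, ← h2, hcomm])
  have heval : ∀ c : ℂ, p.eval c = p.eval (c + n) := by
    intro c
    have h4 := congrArg (MvPolynomial.aeval (fun i : Fin 3 => (![0, 0, c] : Fin 3 → ℂ) i)) heq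
    rw [← Polynomial.aeval_algHom_apply, ← Polynomial.aeval_algHom_apply] at h4
    simpa [Polynomial.coe_aeval_eq_eval] using h4
  have hiter : ∀ k : ℕ, p.eval ((k : ℂ) * n) = p.eval 0 := by
    intro k
    induction k with
    | zero => simp
    | succ k ih =>
      have e : (((k : ℕ) + 1 : ℕ) : ℂ) * n = (k : ℂ) * n + n := by push_cast; ring
      rw [e, ← heval ((k : ℂ) * n), ih]
  have hq0 : p - Polynomial.C (p.eval 0) = 0 := by
    apply Polynomial.eq_zero_of_infinite_isRoot
    apply Set.infinite_of_injective_forall_mem (f := fun k : ℕ => (k : ℂ) * n)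
    · intro a b hab
      have hn' : (n : ℂ) ≠ 0 := Nat.cast_ne_zero.mpr hn.ne'
      exact Nat.cast_injective (mul_right_cancel₀ hn' hab)
    · intro k
      simp only [Set.mem_setOf_eq, Polynomial.IsRoot, Polynomial.eval_sub, Polynomial.eval_C]
      rw [hiter k, sub_self]
  have hpC : p = Polynomial.C (p.eval 0) := by rwa [sub_eq_zero] at hq0
  rw [Algebra.mem_bot]
  refine ⟨p.eval 0, ?_⟩
  rw [← hzp]
  conv_rhs => rw [hpC]
  rw [Polynomial.aeval_C]
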